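/- Let S be a P-semigroup that is a C-semigroup, and let a be a minimal generator of S such that S \ {a} is a submonoid. Then S \ {a} is NOT a P-semigroup if and only if there exists p ∈ P such that a − p ∈ S \ {0} and a − p + p' ∉ S for all p' ∈ P \ {p}. -/
import Mathlib


/-- A monomial order on `ℕ^d`: a total order compatible with addition,
with `0` as least element. -/
def IsMonomialOrder (d : ℕ) (le : (Fin d → ℕ) → (Fin d → ℕ) → Prop) : Prop :=
  (∀ a, le a a) ∧ (∀ a b, le a b → le b a → a = b) ∧
  (∀ a b c, le a b → le b c → le a c) ∧ (∀ a b, le a b ∨ le b a) ∧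
  (∀ a b c, le a b → le (a + c) (b + c)) ∧ (∀ a, le 0 a)

/-- `S` is a `C`-semigroup: a submonoid of the cone `C` with finite complement in `C`. -/
def IsCSgp {d : ℕ} (C : AddSubmonoid (Fin d → ℕ)) (S : Set (Fin d → ℕ)) : Prop :=
  0 ∈ S ∧ (∀ x ∈ S, ∀ y ∈ S, x + y ∈ S) ∧ S ⊆ (C : Set (Fin d → ℕ)) ∧
    ((C : Set (Fin d → ℕ)) \ S).Finite

/-- `S` is a `P`-semigroup: for every nonzero `s ∈ S` there is `p ∈ P` with `s + p ∈ S`. -/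
def IsPSgp {d : ℕ} (P : Set (Fin d → ℕ)) (S : Set (Fin d → ℕ)) : Prop :=
  ∀ s ∈ S, s ≠ 0 → ∃ p ∈ P, s + p ∈ S

/-- `a` is a minimal generator of `S`. -/
def IsMinGen {d : ℕ} (S : Set (Fin d → ℕ)) (a : Fin d → ℕ) : Prop :=
  a ∈ S ∧ a ≠ 0 ∧ ¬ ∃ x ∈ S, ∃ y ∈ S, x ≠ 0 ∧ y ≠ 0 ∧ a = x + y

theorem stmt_2 {d : ℕ} (C : AddSubmonoid (Fin d → ℕ)) (hCfg : C.FG)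
    (P : Set (Fin d → ℕ)) (hPfin : P.Finite) (hP0 : (0 : Fin d → ℕ) ∉ P)
    (S : Set (Fin d → ℕ)) (hS : IsCSgp C S) (hSP : IsPSgp P S)
    (a : Fin d → ℕ) (ha : IsMinGen S a)
    (hmono : 0 ∈ S \ {a} ∧ ∀ x ∈ S \ {a}, ∀ y ∈ S \ {a}, x + y ∈ S \ {a}) :
    ¬ IsPSgp P (S \ {a}) ↔
      ∃ p ∈ P, ∃ s ∈ S, s ≠ 0 ∧ s + p = a ∧
        ∀ p' ∈ P, p' ≠ p → s + p' ∉ S := by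
  constructor
  · intro h
    simp only [IsPSgp, not_forall] at h
    obtain ⟨s, hsS, hs0, hsp⟩ := h
    push_neg at hsp
    obtain ⟨hsS', hsa⟩ := hsS
    obtain ⟨p, hpP, hspS⟩ := hSP s hsS' hs0
    have heq : s + p = a := by
      by_contra hne
      exact hsp p hpP ⟨hspS, hne⟩
    refine ⟨p, hpP, s, hsS', hs0, heq, ?_⟩
    intro p' hp' hne hmem
    have : s + p' = a := by
      by_contra h2
      exact hsp p' hp' ⟨hmem, h2⟩
    exact hne (add_left_cancel (this.trans heq.symm))
  · rintro ⟨p, hpP, s, hsS, hs0, heq, hall⟩ hPS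
    have hsa : s ≠ a := by
      intro h
      subst h
      have : s + p = s + 0 := by simpa using heq
      exact hP0 (add_left_cancel this ▸ hpP)
    obtain ⟨p', hp'P, hmem⟩ := hPS s ⟨hsS, hsa⟩ hs0
    by_cases hpp : p' = p
    · subst hpp
      exact hmem.2 heq
    · exact hall p' hp'P hpp hmem.1
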